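/- Let ℙ and ℚ be shift-invariant probability measures on 𝒜^ℕ with Wₙ(x,y) = inf{k ≥ 1 : y_k^{k+n−1} = x₁ⁿ}. For every ε > 0, define 𝓑ₙ,ε := {(x,y) : Wₙ(x,y) ≤ exp(−log ℚₙ(x₁ⁿ) − nε)}. Then (ℙ×ℚ)(𝓑ₙ,ε) ≤ e^{−nε} for every n, and hence ∑ₙ (ℙ×ℚ)(𝓑ₙ,ε) < ∞; consequently liminf_{n→∞}(1/n)(log Wₙ(x,y) + log ℚₙ(x₁ⁿ)) ≥ 0 for (ℙ×ℚ)-almost every (x,y). No mixing assumption on ℙ or ℚ is needed. -/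

import Mathlib

open MeasureTheory Filter Finset
open scoped ENNReal

variable {𝒜 : Type*}

/-- The left shift on one-sided sequences. -/
def shift : (ℕ → 𝒜) → (ℕ → 𝒜) := fun x n => x (n + 1)

/-- The `n`-prefix of a sequence (0-indexed). -/
def pref (n : ℕ) (x : ℕ → 𝒜) : Fin n → 𝒜 := fun i => x i.val

/-- The cylinder determined by a word. -/
def cyl {n : ℕ} (a : Fin n → 𝒜) : Set (ℕ → 𝒜) := {x | pref n x = a}

/-- The `n`-th marginal of a measure, as a real-valued function on words. -/
noncomputable def marg [MeasurableSpace 𝒜] (P : Measure (ℕ → 𝒜)) (n : ℕ)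
    (a : Fin n → 𝒜) : ℝ := (P (cyl a)).toReal

/-- The reversal of a word with respect to an involution `θ`. -/
def wordRev (θ : 𝒜 → 𝒜) {n : ℕ} (a : Fin n → 𝒜) : Fin n → 𝒜 := fun i => θ (a i.rev)

/-- Shift invariance of a measure. -/
def ShiftInv [MeasurableSpace 𝒜] (P : Measure (ℕ → 𝒜)) : Prop :=
  ∀ s : Set (ℕ → 𝒜), P (shift ⁻¹' s) = P s

/-- The waiting time `Wₙ(x,y)`: first `k ≥ 1` such that `y_k^{k+n−1} = x₁ⁿ`
(0-indexed: `y (k−1+i) = x i` for `i < n`), with value `∞` if no such `k` exists. -/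
noncomputable def waitT (n : ℕ) (x y : ℕ → 𝒜) : ℕ∞ :=
  sInf ((fun k : ℕ => (k : ℕ∞)) ''
    {k : ℕ | 1 ≤ k ∧ ∀ i : Fin n, y (k - 1 + i.val) = x i.val})

/-- The recurrence time `Rₙ(x)`: first `k ≥ 1` such that `x_{n+k}^{n+k+n−1} = x₁ⁿ`. -/
noncomputable def recT (n : ℕ) (x : ℕ → 𝒜) : ℕ∞ :=
  sInf ((fun k : ℕ => (k : ℕ∞)) ''
    {k : ℕ | 1 ≤ k ∧ ∀ i : Fin n, x (n + k - 1 + i.val) = x i.val})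

/-- The reversed recurrence time `R̂ₙ(x)`: first `k ≥ 1` such that
`x_{n+k}^{n+k+n−1} = x̂₁ⁿ`, where `x̂₁ⁿ` is the `θ`-reversal of the `n`-prefix. -/
noncomputable def recRevT (θ : 𝒜 → 𝒜) (n : ℕ) (x : ℕ → 𝒜) : ℕ∞ :=
  sInf ((fun k : ℕ => (k : ℕ∞)) ''
    {k : ℕ | 1 ≤ k ∧ ∀ i : Fin n, x (n + k - 1 + i.val) = wordRev θ (pref n x) i})

/-- `(1/n)(log Wₙ(x,y) + log ℚₙ(x₁ⁿ))`, valued in `EReal`, equal to `⊤` when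
`Wₙ(x,y) = ∞` (convention `log ∞ = ∞`). -/
noncomputable def waitLogTerm [Fintype 𝒜] [MeasurableSpace 𝒜] (Q : Measure (ℕ → 𝒜))
    (n : ℕ) (x y : ℕ → 𝒜) : EReal :=
  if waitT n x y = ⊤ then (⊤ : EReal)
  else (((Real.log (WithTop.untopD 0 (waitT n x y) : ℕ) +
      Real.log (marg Q n (pref n x))) / n : ℝ) : EReal)

lemma shift_iterate_apply (j : ℕ) (y : ℕ → 𝒜) (i : ℕ) : (shift^[j]) y i = y (i + j) := by
  induction j generalizing y with
  | zero => rfl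
  | succ j ih =>
    rw [Function.iterate_succ_apply, ih]; rfl

lemma qmeas_iter [MeasurableSpace 𝒜] {Q : Measure (ℕ → 𝒜)} (hQ : ShiftInv Q) (j : ℕ)
    (s : Set (ℕ → 𝒜)) : Q ((shift^[j]) ⁻¹' s) = Q s := by
  induction j with
  | zero => simp
  | succ j ih => rw [Function.iterate_succ, Set.preimage_comp, hQ, ih]

lemma waitT_spec {n k : ℕ} {x y : ℕ → 𝒜} (h : waitT n x y = (k : ℕ∞)) :
    1 ≤ k ∧ ∀ i : Fin n, y (k - 1 + i.val) = x i.val := by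
  set S := {k : ℕ | 1 ≤ k ∧ ∀ i : Fin n, y (k - 1 + i.val) = x i.val} with hS
  have hne : S.Nonempty := by
    by_contra hS'
    rw [Set.not_nonempty_iff_eq_empty] at hS'
    rw [waitT, ← hS, hS'] at h
    simp at h
  have heq : waitT n x y = ((sInf S : ℕ) : ℕ∞) := by
    apply le_antisymm
    · exact sInf_le ⟨sInf S, Nat.sInf_mem hne, rfl⟩
    · apply le_sInf
      rintro b ⟨j, hj, rfl⟩
      exact Nat.cast_le.mpr (Nat.sInf_le hj)
  rw [h] at heq
  have : k = sInf S := by exact_mod_cast heq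
  rw [this]
  exact Nat.sInf_mem hne

lemma measurable_cyl [MeasurableSpace 𝒜] [MeasurableSingletonClass 𝒜] {n : ℕ} (a : Fin n → 𝒜) :
    MeasurableSet (cyl a) := by
  have : cyl a = ⋂ i : Fin n, (fun x : ℕ → 𝒜 => x i.val) ⁻¹' {a i} := by
    ext x
    simp [cyl, pref, funext_iff]
  rw [this]
  exact MeasurableSet.iInter fun i => (measurable_pi_apply i.val) (measurableSet_singleton _)

lemma sum_cyl_eq_one [Fintype 𝒜] [MeasurableSpace 𝒜] [MeasurableSingletonClass 𝒜]
    (P : Measure (ℕ → 𝒜)) [IsProbabilityMeasure P] (n : ℕ) :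
    ∑ a : Fin n → 𝒜, P (cyl a) = 1 := by
  have hdisj : Pairwise (Function.onFun Disjoint fun a : Fin n → 𝒜 => cyl a) := by
    intro a b hab
    refine Set.disjoint_left.mpr fun x hx hx' => hab ?_
    exact hx.symm.trans hx'
  have h1 := measure_iUnion (μ := P) hdisj (fun a => measurable_cyl a)
  rw [tsum_fintype] at h1
  rw [← h1]
  have h2 : (⋃ a : Fin n → 𝒜, cyl a) = Set.univ := by
    ext x
    simp only [Set.mem_iUnion, Set.mem_univ, iff_true]
    exact ⟨pref n x, rfl⟩
  rw [h2, measure_univ]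

lemma core_bound [Fintype 𝒜] [MeasurableSpace 𝒜] [MeasurableSingletonClass 𝒜]
    (P Q : Measure (ℕ → 𝒜)) [IsProbabilityMeasure P] [IsProbabilityMeasure Q]
    (hQ : ShiftInv Q) (ε : ℝ) (n : ℕ) :
    (P.prod Q) {p : (ℕ → 𝒜) × (ℕ → 𝒜) |
        ∃ k : ℕ, waitT n p.1 p.2 = (k : ℕ∞) ∧
          (k : ℝ) ≤ Real.exp (-Real.log (marg Q n (pref n p.1)) - n * ε)} ≤
      ENNReal.ofReal (Real.exp (-(n * ε))) := by
  classical
  set t : (Fin n → 𝒜) → ℝ := fun a => Real.exp (-Real.log (marg Q n a) - n * ε) with ht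
  set T : (Fin n → 𝒜) → Set (ℕ → 𝒜) :=
    fun a => ⋃ k ∈ Finset.Icc 1 ⌊t a⌋₊, (shift^[k - 1]) ⁻¹' (cyl a) with hT
  have hsub : {p : (ℕ → 𝒜) × (ℕ → 𝒜) |
        ∃ k : ℕ, waitT n p.1 p.2 = (k : ℕ∞) ∧
          (k : ℝ) ≤ Real.exp (-Real.log (marg Q n (pref n p.1)) - n * ε)} ⊆
      ⋃ a ∈ (Finset.univ : Finset (Fin n → 𝒜)), cyl a ×ˢ T a := by
    rintro ⟨x, y⟩ ⟨k, hk, hkle⟩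
    obtain ⟨hk1, hmatch⟩ := waitT_spec hk
    refine Set.mem_iUnion₂.mpr ⟨pref n x, Finset.mem_univ _, ?_, ?_⟩
    · rfl
    · refine Set.mem_iUnion₂.mpr ⟨k, Finset.mem_Icc.mpr ⟨hk1, Nat.le_floor hkle⟩, ?_⟩
      show pref n (shift^[k - 1] y) = pref n x
      funext i
      show (shift^[k - 1] y) i.val = x i.val
      rw [shift_iterate_apply, Nat.add_comm]
      exact hmatch i
  have hTbound : ∀ a : Fin n → 𝒜, Q (T a) ≤ ENNReal.ofReal (Real.exp (-(n * ε))) := by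
    intro a
    have h1 : Q (T a) ≤ ∑ k ∈ Finset.Icc 1 ⌊t a⌋₊, Q ((shift^[k - 1]) ⁻¹' (cyl a)) :=
      measure_biUnion_finset_le _ _
    have h2 : ∀ k ∈ Finset.Icc 1 ⌊t a⌋₊, Q ((shift^[k - 1]) ⁻¹' (cyl a)) = Q (cyl a) :=
      fun k _ => qmeas_iter hQ _ _
    rw [Finset.sum_congr rfl h2, Finset.sum_const, Nat.card_Icc] at h1
    simp only [Nat.add_sub_cancel, nsmul_eq_mul] at h1
    refine h1.trans ?_
    rcases eq_or_ne (Q (cyl a)) 0 with hq | hq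
    · simp [hq]
    · have hqt : Q (cyl a) ≠ ⊤ := measure_ne_top _ _
      set q : ℝ := (Q (cyl a)).toReal with hqdef
      have hq0 : 0 < q := ENNReal.toReal_pos hq hqt
      have hN : (⌊t a⌋₊ : ℝ) * q ≤ Real.exp (-(n * ε)) := by
        have h3 : (⌊t a⌋₊ : ℝ) ≤ t a := Nat.floor_le (Real.exp_pos _).le
        have h4 : t a * q = Real.exp (-(n * ε)) := by
          have hm : marg Q n a = q := rfl
          rw [ht]
          simp only
          rw [hm, show -Real.log q - n * ε = -Real.log q + -(n * ε) by ring,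
            Real.exp_add, Real.exp_neg, Real.exp_log hq0]
          field_simp
        nlinarith
      have heq : (⌊t a⌋₊ : ℝ≥0∞) * Q (cyl a) = ENNReal.ofReal ((⌊t a⌋₊ : ℝ) * q) := by
        rw [ENNReal.ofReal_mul (by positivity), ENNReal.ofReal_natCast,
          ENNReal.ofReal_toReal hqt]
      rw [heq]
      exact ENNReal.ofReal_le_ofReal hN
  calc (P.prod Q) _ ≤ (P.prod Q) (⋃ a ∈ (Finset.univ : Finset (Fin n → 𝒜)), cyl a ×ˢ T a) :=
        measure_mono hsub
    _ ≤ ∑ a : Fin n → 𝒜, (P.prod Q) (cyl a ×ˢ T a) := measure_biUnion_finset_le _ _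
    _ = ∑ a : Fin n → 𝒜, P (cyl a) * Q (T a) := by
        simp [Measure.prod_prod]
    _ ≤ ∑ a : Fin n → 𝒜, P (cyl a) * ENNReal.ofReal (Real.exp (-(n * ε))) :=
        Finset.sum_le_sum fun a _ => mul_le_mul_right (hTbound a) _
    _ = (∑ a : Fin n → 𝒜, P (cyl a)) * ENNReal.ofReal (Real.exp (-(n * ε))) :=
        (Finset.sum_mul _ _ _).symm
    _ = 1 * ENNReal.ofReal (Real.exp (-(n * ε))) := by rw [sum_cyl_eq_one]
    _ = _ := one_mul _

/-- With `𝓑ₙ,ε := {(x,y) : Wₙ(x,y) ≤ exp(−log ℚₙ(x₁ⁿ) − nε)}`: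
`(ℙ×ℚ)(𝓑ₙ,ε) ≤ e^{−nε}`, hence `∑ₙ (ℙ×ℚ)(𝓑ₙ,ε) < ∞`, and consequently
`liminf (1/n)(log Wₙ(x,y) + log ℚₙ(x₁ⁿ)) ≥ 0` for `(ℙ×ℚ)`-a.e. `(x,y)`.
No mixing assumption on `ℙ` or `ℚ` is needed. -/
theorem waiting_time_lower_estimate [Fintype 𝒜] [MeasurableSpace 𝒜]
    [MeasurableSingletonClass 𝒜]
    (P Q : Measure (ℕ → 𝒜)) [IsProbabilityMeasure P] [IsProbabilityMeasure Q]
    (hP : ShiftInv P) (hQ : ShiftInv Q) :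
    (∀ ε : ℝ, 0 < ε → ∀ n : ℕ,
      ((P.prod Q) {p : (ℕ → 𝒜) × (ℕ → 𝒜) |
          ∃ k : ℕ, waitT n p.1 p.2 = (k : ℕ∞) ∧
            (k : ℝ) ≤ Real.exp (-Real.log (marg Q n (pref n p.1)) - n * ε)}).toReal ≤
        Real.exp (-(n * ε))) ∧
    (∀ ε : ℝ, 0 < ε →
      Summable (fun n : ℕ =>
        ((P.prod Q) {p : (ℕ → 𝒜) × (ℕ → 𝒜) |
          ∃ k : ℕ, waitT n p.1 p.2 = (k : ℕ∞) ∧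
            (k : ℝ) ≤ Real.exp (-Real.log (marg Q n (pref n p.1)) - n * ε)}).toReal)) ∧
    (∀ᵐ p ∂(P.prod Q),
      0 ≤ Filter.liminf (fun n : ℕ => waitLogTerm Q n p.1 p.2) atTop) := by

  have key := core_bound P Q hQ
  have hsummexp : ∀ ε : ℝ, 0 < ε → Summable (fun n : ℕ => Real.exp (-(n * ε))) := by
    intro ε hε
    have : (fun n : ℕ => Real.exp (-(n * ε))) = fun n : ℕ => Real.exp (-ε) ^ n := by
      funext n
      rw [← Real.exp_nat_mul]
      ring_nf
    rw [this]
    exact summable_geometric_of_lt_one (Real.exp_pos _).le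
      (Real.exp_lt_one_iff.mpr (neg_lt_zero.mpr hε))
  refine ⟨fun ε _ n => ENNReal.toReal_le_of_le_ofReal (Real.exp_pos _).le (key ε n), ?_, ?_⟩
  · intro ε hε
    exact Summable.of_nonneg_of_le (fun n => ENNReal.toReal_nonneg)
      (fun n => ENNReal.toReal_le_of_le_ofReal (Real.exp_pos _).le (key ε n)) (hsummexp ε hε)
  · have hae : ∀ m : ℕ, ∀ᵐ p ∂(P.prod Q), ∀ᶠ n in atTop,
        p ∉ {p : (ℕ → 𝒜) × (ℕ → 𝒜) | ∃ k : ℕ, waitT n p.1 p.2 = (k : ℕ∞) ∧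
          (k : ℝ) ≤ Real.exp (-Real.log (marg Q n (pref n p.1)) - n * (1 / (m + 1)))} := by
      intro m
      apply MeasureTheory.ae_eventually_notMem
      have hpos : (0:ℝ) < 1 / (m + 1) := by positivity
      refine ne_of_lt (lt_of_le_of_lt (ENNReal.tsum_le_tsum (fun n => key (1 / (m + 1)) n)) ?_)
      rw [← ENNReal.ofReal_tsum_of_nonneg (fun n => (Real.exp_pos _).le)
        (hsummexp _ hpos)]
      exact ENNReal.ofReal_lt_top
    have hae2 := ae_all_iff.mpr hae
    filter_upwards [hae2] with p hp
    set L := liminf (fun n : ℕ => waitLogTerm Q n p.1 p.2) atTop with hL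
    have hm : ∀ m : ℕ, (-(1 / (m + 1) : ℝ) : EReal) ≤ L := by
      intro m
      have hev : ∀ᶠ (n : ℕ) in atTop,
          (-(1 / (m + 1) : ℝ) : EReal) ≤ waitLogTerm Q n p.1 p.2 := by
        filter_upwards [hp m, eventually_ge_atTop 1] with n hn hn1
        by_cases hT : waitT n p.1 p.2 = ⊤
        · rw [waitLogTerm, if_pos hT]
          exact le_top
        · obtain ⟨k, hk⟩ := WithTop.ne_top_iff_exists.mp hT
          rw [waitLogTerm, if_neg hT, ← hk]
          have hgt : Real.exp (-Real.log (marg Q n (pref n p.1)) - n * (1 / (m + 1))) <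
              (k : ℝ) := by
            by_contra hc
            push_neg at hc
            exact hn ⟨k, hk.symm, hc⟩
          have hlog : -Real.log (marg Q n (pref n p.1)) - n * (1 / (m + 1)) <
              Real.log k := by
            have h5 := Real.log_lt_log (Real.exp_pos _) hgt
            rwa [Real.log_exp] at h5
          have hn0 : (0:ℝ) < n := by exact_mod_cast hn1
          rw [WithTop.untopD_coe]
          apply EReal.coe_le_coe_iff.mpr
          rw [le_div_iff₀ hn0]
          nlinarith [hlog]
      exact le_liminf_of_le (by isBoundedDefault) hev
    refine le_of_forall_lt fun c hc => ?_
    induction c using EReal.rec with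
    | bot => exact lt_of_lt_of_le (EReal.bot_lt_coe _) (hm 0)
    | coe r =>
      have hr : r < 0 := by exact_mod_cast hc
      obtain ⟨m, hm'⟩ := exists_nat_one_div_lt (neg_pos.mpr hr)
      refine lt_of_lt_of_le ?_ (hm m)
      exact_mod_cast (by linarith : r < -(1 / (m + 1) : ℝ))
    | top => exact absurd hc (by simp)
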